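/- For all m ≥ 2, the domination number of the 2×m grid graph equals ⌈(m+1)/2⌉. -/

import Mathlib

/-- The `n × m` grid graph: vertices `[n] × [m]`, with `(i,j)` adjacent to `(k,l)`
iff `|i-k| + |j-l| = 1`. -/
def gridGraph (n m : ℕ) : SimpleGraph (Fin n × Fin m) where
  Adj u v := Nat.dist u.1.val v.1.val + Nat.dist u.2.val v.2.val = 1
  symm := by constructor; intro u v h; simpa [Nat.dist_comm] using h
  loopless := by constructor; intro u h; simp [Nat.dist_self] at h

instance (n m : ℕ) : DecidableRel (gridGraph n m).Adj :=
  fun _ _ => instDecidableEqNat _ _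

/-- Closed neighborhood `N[S]` of a set of vertices. -/
def closedNbhd (n m : ℕ) (S : Finset (Fin n × Fin m)) : Finset (Fin n × Fin m) :=
  S.biUnion fun v => insert v ((gridGraph n m).neighborFinset v)

/-- The loss `ℓ(S) = 5|S| - |N[S]|`. -/
def loss (n m : ℕ) (S : Finset (Fin n × Fin m)) : ℤ :=
  5 * S.card - (closedNbhd n m S).card

/-- `D` is a dominating set: every vertex lies in `N[D]`. -/
def IsDominating (n m : ℕ) (D : Finset (Fin n × Fin m)) : Prop :=
  closedNbhd n m D = Finset.univ

/-- The domination number `γ(G_{n,m})`. -/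
noncomputable def domNumber (n m : ℕ) : ℕ :=
  sInf {k | ∃ D : Finset (Fin n × Fin m), IsDominating n m D ∧ D.card = k}

/-- The minimum loss `ℓ_{n,m}` over dominating sets of `G_{n,m}`. -/
noncomputable def minLoss (n m : ℕ) : ℤ :=
  sInf {l | ∃ D : Finset (Fin n × Fin m), IsDominating n m D ∧ loss n m D = l}


lemma key_arith : ∀ m : ℕ, 2 ≤ m → ∀ d : ℕ → ℕ,
    (∀ j, m ≤ j → d j = 0) →
    (∀ j < m, 1 ≤ d j ∨ 2 ≤ d (j-1) + d (j+1)) →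
    m/2 + 1 ≤ ∑ j ∈ Finset.range m, d j := by
  intro m
  induction m using Nat.strong_induction_on with
  | _ m ih =>
    intro hm d hvan hP
    rcases Nat.lt_or_ge m 4 with h4 | h4
    · interval_cases m
      · have h0 := hP 0 (by omega)
        have h1 := hP 1 (by omega)
        have h2 := hvan 2 (by omega)
        norm_num at h0 h1
        rw [Finset.sum_range_succ, Finset.sum_range_succ, Finset.sum_range_zero]
        omega
      · have h0 := hP 0 (by omega)
        have h2 := hP 2 (by omega)
        have h3 := hvan 3 (by omega)
        norm_num at h0 h2
        rw [Finset.sum_range_succ, Finset.sum_range_succ, Finset.sum_range_succ,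
          Finset.sum_range_zero]
        omega
    · obtain ⟨k, rfl⟩ : ∃ k, m = k + 3 := ⟨m - 3, by omega⟩
      have hk1 : 1 ≤ k := by omega
      rcases Nat.eq_zero_or_pos (d (k+2)) with hlast | hlast
      · -- last column empty: d (k+1) ≥ 2
        have hPe := hP (k+2) (by omega)
        have hv3 := hvan (k+3) (by omega)
        have hv3' : d (k+2+1) = 0 := hvan _ (by omega)
        have hd2 : 2 ≤ d (k+1) := by
          rcases hPe with h | h
          · omega
          · have e : k + 2 - 1 = k + 1 := by omega
            rw [e] at h
            omega
        set d' : ℕ → ℕ := fun j => if j = k then d k + 1 else if j ≤ k then d j else 0 with hd'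
        have mono : ∀ i, i ≤ k → d i ≤ d' i := by
          intro i hi
          by_cases hik : i = k
          · subst hik; simp [hd']
          · simp [hd', hik, hi]
        have hvan' : ∀ j, k + 1 ≤ j → d' j = 0 := by
          intro j hj
          have h1 : j ≠ k := by omega
          have h2 : ¬ j ≤ k := by omega
          simp [hd', h1, h2]
        have hP' : ∀ j < k + 1, 1 ≤ d' j ∨ 2 ≤ d' (j-1) + d' (j+1) := by
          intro j hj
          rcases Nat.lt_or_ge j k with hjk | hjk
          · have hPj := hP j (by omega)
            have b1 := mono j (by omega)
            have b2 := mono (j-1) (by omega)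
            have b3 := mono (j+1) (by omega)
            omega
          · have hjk' : j = k := by omega
            rw [hjk']
            left
            simp [hd']
        have hIH := ih (k+1) (by omega) (by omega) d' hvan' hP'
        have hsum' : ∑ j ∈ Finset.range (k+1), d' j
            = (∑ j ∈ Finset.range k, d j) + (d k + 1) := by
          rw [Finset.sum_range_succ]
          congr 1
          · exact Finset.sum_congr rfl fun j hj => by
              have hj' := Finset.mem_range.mp hj
              have h1 : j ≠ k := by omega
              have h2 : j ≤ k := by omega
              simp [hd', h1, h2]
          · simp [hd']
        rw [Finset.sum_range_succ, Finset.sum_range_succ, Finset.sum_range_succ]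
        omega
      · set d' : ℕ → ℕ := fun j => if j = k then d k + d (k+1) else if j ≤ k then d j else 0
          with hd'
        have mono : ∀ i, i ≤ k → d i ≤ d' i := by
          intro i hi
          by_cases hik : i = k
          · subst hik; simp [hd']
          · simp [hd', hik, hi]
        have hvan' : ∀ j, k + 1 ≤ j → d' j = 0 := by
          intro j hj
          have h1 : j ≠ k := by omega
          have h2 : ¬ j ≤ k := by omega
          simp [hd', h1, h2]
        have hP' : ∀ j < k + 1, 1 ≤ d' j ∨ 2 ≤ d' (j-1) + d' (j+1) := by
          intro j hj
          rcases Nat.lt_or_ge j k with hjk | hjk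
          · have hPj := hP j (by omega)
            have b1 := mono j (by omega)
            have b2 := mono (j-1) (by omega)
            have b3 := mono (j+1) (by omega)
            omega
          · have hjk' : j = k := by omega
            rw [hjk']
            have hPk := hP k (by omega)
            have e1 : d' k = d k + d (k+1) := by simp [hd']
            have e2 : d' (k+1) = 0 := hvan' (k+1) (by omega)
            have e3 : d' (k-1) = d (k-1) := by
              have h1 : k - 1 ≠ k := by omega
              have h2 : k - 1 ≤ k := by omega
              simp [hd', h1, h2]
            rw [e1, e2, e3]
            omega
        have hIH := ih (k+1) (by omega) (by omega) d' hvan' hP'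
        have hsum' : ∑ j ∈ Finset.range (k+1), d' j
            = (∑ j ∈ Finset.range k, d j) + (d k + d (k+1)) := by
          rw [Finset.sum_range_succ]
          congr 1
          · exact Finset.sum_congr rfl fun j hj => by
              have hj' := Finset.mem_range.mp hj
              have h1 : j ≠ k := by omega
              have h2 : j ≤ k := by omega
              simp [hd', h1, h2]
          · simp [hd']
        rw [Finset.sum_range_succ, Finset.sum_range_succ, Finset.sum_range_succ]
        omega

lemma mem_closedNbhd_iff {n m : ℕ} (D : Finset (Fin n × Fin m)) (x : Fin n × Fin m) :
    x ∈ closedNbhd n m D ↔ ∃ u ∈ D, x = u ∨ (gridGraph n m).Adj u x := by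
  simp [closedNbhd, Finset.mem_biUnion, Finset.mem_insert,
    SimpleGraph.mem_neighborFinset]

lemma lower_bound (m : ℕ) (hm : 2 ≤ m) (D : Finset (Fin 2 × Fin m))
    (hD : IsDominating 2 m D) : m / 2 + 1 ≤ D.card := by
  classical
  set d : ℕ → ℕ := fun j => (D.filter fun v => v.2.val = j).card with hd
  have hcard : D.card = ∑ j ∈ Finset.range m, d j :=
    Finset.card_eq_sum_card_fiberwise (fun x _ => Finset.mem_range.mpr x.2.2)
  have hvan : ∀ j, m ≤ j → d j = 0 := by
    intro j hj
    simp only [hd, Finset.card_eq_zero, Finset.filter_eq_empty_iff]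
    intro v _
    have := v.2.2
    omega
  have hdom : ∀ x : Fin 2 × Fin m, ∃ u ∈ D, x = u ∨ (gridGraph 2 m).Adj u x := by
    intro x
    rw [← mem_closedNbhd_iff D x, hD]
    exact Finset.mem_univ x
  have hP : ∀ j < m, 1 ≤ d j ∨ 2 ≤ d (j-1) + d (j+1) := by
    intro j hj
    rcases Nat.eq_zero_or_pos (d j) with hdj | hdj
    swap
    · left; omega
    right
    have hnone : ∀ v ∈ D, v.2.val ≠ j := by
      intro v hv
      have h0 : (D.filter fun v => v.2.val = j) = ∅ := Finset.card_eq_zero.mp hdj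
      rw [Finset.filter_eq_empty_iff] at h0
      exact h0 hv
    -- dominators of the two vertices in column j
    have key : ∀ i : Fin 2, ∃ u ∈ D, u.1.val = i.val ∧
        (u.2.val = j + 1 ∨ (1 ≤ j ∧ u.2.val = j - 1)) := by
      intro i
      obtain ⟨u, huD, hu⟩ := hdom (i, ⟨j, hj⟩)
      rcases hu with rfl | hadj
      · exact absurd rfl (hnone _ huD)
      · have hcol : u.2.val ≠ j := hnone u huD
        have : Nat.dist u.1.val i.val + Nat.dist u.2.val j = 1 := hadj
        simp only [Nat.dist] at this
        exact ⟨u, huD, by omega, by omega⟩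
    obtain ⟨u0, hu0D, hu0r, hu0c⟩ := key 0
    obtain ⟨u1, hu1D, hu1r, hu1c⟩ := key 1
    have hne : u0 ≠ u1 := by
      intro h
      rw [h] at hu0r
      simp [hu0r] at hu1r
    have hsub : ({u0, u1} : Finset (Fin 2 × Fin m)) ⊆
        (D.filter fun v => v.2.val = j - 1) ∪ (D.filter fun v => v.2.val = j + 1) := by
      intro z hz
      simp only [Finset.mem_insert, Finset.mem_singleton] at hz
      simp only [Finset.mem_union, Finset.mem_filter]
      rcases hz with rfl | rfl
      · rcases hu0c with h | h
        · exact Or.inr ⟨hu0D, h⟩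
        · exact Or.inl ⟨hu0D, h.2⟩
      · rcases hu1c with h | h
        · exact Or.inr ⟨hu1D, h⟩
        · exact Or.inl ⟨hu1D, h.2⟩
    have h2 : 2 ≤ ((D.filter fun v => v.2.val = j - 1) ∪
        (D.filter fun v => v.2.val = j + 1)).card := by
      calc 2 = ({u0, u1} : Finset (Fin 2 × Fin m)).card := (Finset.card_pair hne).symm
      _ ≤ _ := Finset.card_le_card hsub
    calc 2 ≤ _ := h2
    _ ≤ d (j-1) + d (j+1) := Finset.card_union_le _ _
  rw [hcard]
  exact key_arith m hm d hvan hP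

lemma mem_closedNbhd_iff' {n m : ℕ} (D : Finset (Fin n × Fin m)) (x : Fin n × Fin m) :
    x ∈ closedNbhd n m D ↔ ∃ u ∈ D, x = u ∨ (gridGraph n m).Adj u x := by
  simp [closedNbhd, Finset.mem_biUnion, Finset.mem_insert,
    SimpleGraph.mem_neighborFinset]

/-- the vertex placed for index `k` in the dominating pattern -/
def fUp (m : ℕ) (hm : 2 ≤ m) (k : ℕ) : Fin 2 × Fin m :=
  if h : 2 * k < m then (⟨k % 2, by omega⟩, ⟨2 * k, h⟩)
  else (⟨(m / 2) % 2, by omega⟩, ⟨m - 1, by omega⟩)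

lemma upper_bound (m : ℕ) (hm : 2 ≤ m) :
    ∃ D : Finset (Fin 2 × Fin m), IsDominating 2 m D ∧ D.card = m / 2 + 1 := by
  classical
  refine ⟨(Finset.range (m / 2 + 1)).image (fUp m hm), ?_, ?_⟩
  · -- dominating
    rw [IsDominating, Finset.eq_univ_iff_forall]
    intro x
    obtain ⟨i, j⟩ := x
    rw [mem_closedNbhd_iff']
    have hi2 := i.2
    have hj2 := j.2
    by_cases hj : j.val % 2 = 0
    · -- even column: the vertex at column j covers both rows
      refine ⟨fUp m hm (j.val / 2), Finset.mem_image_of_mem _ (Finset.mem_range.mpr (by omega)),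
        ?_⟩
      have h2k : 2 * (j.val / 2) < m := by omega
      rw [fUp, dif_pos h2k]
      by_cases hrow : i.val = (j.val / 2) % 2
      · left
        ext <;> simp <;> omega
      · right
        show Nat.dist ((j.val/2) % 2) i.val + Nat.dist (2 * (j.val / 2)) j.val = 1
        simp only [Nat.dist]
        omega
    · -- odd column
      by_cases hrow : i.val = (j.val / 2) % 2
      · -- dominated from the left, by fUp (j/2) at column j - 1
        refine ⟨fUp m hm (j.val / 2), Finset.mem_image_of_mem _ (Finset.mem_range.mpr (by omega)),
          ?_⟩
        have h2k : 2 * (j.val / 2) < m := by omega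
        rw [fUp, dif_pos h2k]
        right
        show Nat.dist ((j.val/2) % 2) i.val + Nat.dist (2 * (j.val / 2)) j.val = 1
        simp only [Nat.dist]
        omega
      · by_cases hend : 2 * (j.val / 2) + 2 < m
        · -- dominated from the right, by fUp (j/2 + 1) at column j + 1
          refine ⟨fUp m hm (j.val / 2 + 1),
            Finset.mem_image_of_mem _ (Finset.mem_range.mpr (by omega)), ?_⟩
          have h2k : 2 * (j.val / 2 + 1) < m := by omega
          rw [fUp, dif_pos h2k]
          right
          show Nat.dist ((j.val/2 + 1) % 2) i.val + Nat.dist (2 * (j.val / 2 + 1)) j.val = 1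
          simp only [Nat.dist]
          omega
        · -- j = m - 1, m even: the extra vertex sits exactly at (i, j)
          refine ⟨fUp m hm (j.val / 2 + 1),
            Finset.mem_image_of_mem _ (Finset.mem_range.mpr (by omega)), ?_⟩
          have h2k : ¬ 2 * (j.val / 2 + 1) < m := by omega
          rw [fUp, dif_neg h2k]
          left
          ext <;> simp <;> omega
  · -- cardinality
    rw [Finset.card_image_of_injOn, Finset.card_range]
    intro k1 hk1 k2 hk2 heq
    simp only [Finset.coe_range, Set.mem_Iio] at hk1 hk2
    by_cases h1 : 2 * k1 < m <;> by_cases h2 : 2 * k2 < m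
    · rw [fUp, dif_pos h1, fUp, dif_pos h2, Prod.mk.injEq, Fin.mk.injEq, Fin.mk.injEq] at heq
      omega
    · rw [fUp, dif_pos h1, fUp, dif_neg h2, Prod.mk.injEq, Fin.mk.injEq, Fin.mk.injEq] at heq
      omega
    · rw [fUp, dif_neg h1, fUp, dif_pos h2, Prod.mk.injEq, Fin.mk.injEq, Fin.mk.injEq] at heq
      omega
    · omega

theorem stmt_9 (m : ℕ) (hm : 2 ≤ m) : domNumber 2 m = (m + 2) / 2 := by
  obtain ⟨D, hdom, hcard⟩ := upper_bound m hm
  have hmem : m / 2 + 1 ∈ {k | ∃ D : Finset (Fin 2 × Fin m), IsDominating 2 m D ∧ D.card = k} :=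
    ⟨D, hdom, hcard⟩
  have hle : domNumber 2 m ≤ m / 2 + 1 := Nat.sInf_le hmem
  have hmem2 := Nat.sInf_mem ⟨_, hmem⟩
  obtain ⟨D', hdom', hcard'⟩ := hmem2
  have hge : m / 2 + 1 ≤ domNumber 2 m := by
    rw [domNumber, ← hcard']
    exact lower_bound m hm D' hdom'
  omega
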